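/- In the construction of Proposition: let x ∈ X with nontrivial stabilizer G_x, g₁ ≠ g₂ ∈ G_x, and f₁, f₂ ∈ C_c(G) positive with disjoint supports, f_i(g_i) > 0. Define η₀ ∈ C_c(G, C(X)) by η₀(s)(y) = f₁(s) ∫_{G_y} f₂(h) dμ_y(h) − f₂(s) ∫_{G_y} f₁(h) dμ_y(h). Then: (a) ∫_{G_y} η₀(h)(y) dμ_y(h) = 0 for every y ∈ X; (b) the restriction of h ↦ η₀(h)(x) to G_x is not identically zero. -/

import Mathlib

open MeasureTheory

/-- Let `G` act on a compact space `X` with a continuous field of left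
Haar measures `{μ_y}` on the stabilizers.  Let `x ∈ X` have nontrivial stabilizer,
`g₁ ≠ g₂ ∈ G_x`, and `f₁, f₂ ∈ C_c(G)` nonnegative with disjoint supports and
`f_i(g_i) > 0`.  Define `η₀(s)(y) = f₁(s) ∫_{G_y} f₂ dμ_y − f₂(s) ∫_{G_y} f₁ dμ_y`.
Then (a) `∫_{G_y} η₀(h)(y) dμ_y(h) = 0` for every `y`; and (b) the restriction of
`h ↦ η₀(h)(x)` to `G_x` is not identically zero. -/
theorem stmt11 {G X : Type*} [Group G] [TopologicalSpace G] [IsTopologicalGroup G]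
    [LocallyCompactSpace G] [MeasurableSpace G] [BorelSpace G]
    [TopologicalSpace X] [CompactSpace X] [T2Space X]
    [MulAction G X] [ContinuousSMul G X]
    -- the field of left Haar measures on the stabilizers
    (μ : X → Measure G)
    (hsupp : ∀ y, μ y {g : G | g • y ≠ y} = 0)
    (hinv : ∀ (y : X) (h : G), h • y = y → Measure.map (fun g => h * g) (μ y) = μ y)
    (hpos : ∀ (y : X) (U : Set G), IsOpen U → (∃ g ∈ U, g • y = y) → 0 < μ y U)
    (hfin : ∀ (y : X) (C : Set G), IsCompact C → μ y C < ⊤)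
    (hcont : ∀ f : G → ℝ, Continuous f → HasCompactSupport f →
      Continuous fun y => ∫ g, f g ∂μ y)
    -- the data of the construction
    (x : X) (g₁ g₂ : G) (hg : g₁ ≠ g₂) (hg₁ : g₁ • x = x) (hg₂ : g₂ • x = x)
    (f₁ f₂ : G → ℝ)
    (hf₁c : Continuous f₁) (hf₁supp : HasCompactSupport f₁) (hf₁pos : ∀ g, 0 ≤ f₁ g)
    (hf₂c : Continuous f₂) (hf₂supp : HasCompactSupport f₂) (hf₂pos : ∀ g, 0 ≤ f₂ g)
    (hdisj : Function.support f₁ ∩ Function.support f₂ = ∅)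
    (hf₁g₁ : 0 < f₁ g₁) (hf₂g₂ : 0 < f₂ g₂) :
    (∀ y : X,
      ∫ h, (f₁ h * ∫ k, f₂ k ∂μ y - f₂ h * ∫ k, f₁ k ∂μ y) ∂μ y = 0) ∧
    (∃ h : G, h • x = x ∧
      f₁ h * (∫ k, f₂ k ∂μ x) - f₂ h * (∫ k, f₁ k ∂μ x) ≠ 0) := by
  have hfinM : ∀ y : X, IsFiniteMeasureOnCompacts (μ y) := fun y => ⟨fun K hK => hfin y K hK⟩
  have hint : ∀ (y : X) (f : G → ℝ), Continuous f → HasCompactSupport f →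
      Integrable f (μ y) := fun y f hc hs => by
    have := hfinM y
    exact hc.integrable_of_hasCompactSupport hs
  constructor
  · intro y
    have h1 := hint y f₁ hf₁c hf₁supp
    have h2 := hint y f₂ hf₂c hf₂supp
    rw [integral_sub (h1.mul_const _) (h2.mul_const _),
      integral_mul_const, integral_mul_const]
    ring
  · refine ⟨g₁, hg₁, ?_⟩
    have hf₂g₁ : f₂ g₁ = 0 := by
      by_contra h
      have : g₁ ∈ Function.support f₁ ∩ Function.support f₂ := ⟨hf₁g₁.ne', h⟩
      rw [hdisj] at this
      exact this
    have hI₂ : 0 < ∫ k, f₂ k ∂μ x := by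
      rw [integral_pos_iff_support_of_nonneg hf₂pos (hint x f₂ hf₂c hf₂supp)]
      have hopen : IsOpen (Function.support f₂) := by
        have : Function.support f₂ = f₂ ⁻¹' {0}ᶜ := by
          ext g; simp [Function.support]
        rw [this]
        exact (isClosed_singleton.preimage hf₂c).isOpen_compl
      exact hpos x _ hopen ⟨g₂, hf₂g₂.ne', hg₂⟩
    rw [hf₂g₁]
    have := mul_pos hf₁g₁ hI₂
    nlinarith
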